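/- The language of the rank-based NBA construction C is contained in the language of the source UCA A: every ω-word accepted by C (having a run visiting accepting transitions infinitely often) has no rejecting run in the UCA A, in the special case where A has only one rank available (rank 1), i.e., where C performs a breakpoint construction checking that all runs of A visit rejecting transitions only finitely often. In particular, if every run of C on w that eventually leaves the subset-construction phase reaches an empty obligation set infinitely often, then no run of A on w takes γ-transitions infinitely often. -/
import Mathlib


/-- `ρ` is a run of the automaton with transitions `δ` from `q` on word `w`. -/
def IsRun {A Q : Type*} (δ : Q → A → Set Q) (q : Q) (w : ℕ → A) (ρ : ℕ → Q) : Prop :=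
  ρ 0 = q ∧ ∀ i, ρ (i + 1) ∈ δ (ρ i) (w i)

/-- Breakpoint construction for the rank-1 special case: if the obligation set `O`
of the deterministic breakpoint automaton empties infinitely often (infinitely many
breakpoints, i.e. the run of `C` is accepting), then no run of the UCA `A` on `w`
takes rejecting transitions infinitely often, i.e. `w ∈ L(A)`. -/
theorem stmt8 {A Q : Type*} (δ γ : Q → A → Set Q)
    (hγ : ∀ q σ, γ q σ ⊆ δ q σ)
    (q0 : Q) (w : ℕ → A) (S O : ℕ → Set Q)
    (hS0 : S 0 = {q0}) (hO0 : O 0 = ∅)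
    (hS : ∀ n, S (n + 1) = ⋃ q ∈ S n, δ q (w n))
    (hO : ∀ n, O (n + 1) = (⋃ q ∈ O n, δ q (w n)) ∪ ⋃ q ∈ S n, γ q (w n))
    (hbp : ∀ N : ℕ, ∃ n ≥ N, O n = ∅) :
    ∀ ρ : ℕ → Q, IsRun δ q0 w ρ →
      ¬ (∀ N : ℕ, ∃ i ≥ N, ρ (i + 1) ∈ γ (ρ i) (w i)) := by
  rintro ρ ⟨h0, hstep⟩ hinf
  -- ρ stays in S
  have hρS : ∀ n, ρ n ∈ S n := by
    intro n
    induction n with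
    | zero => simp [h0, hS0]
    | succ n ih =>
      rw [hS n]
      exact Set.mem_biUnion ih (hstep n)
  -- once in O, stays in O
  have hO_stay : ∀ k m, k ≤ m → ρ k ∈ O k → ρ m ∈ O m := by
    intro k m hkm hk
    induction m with
    | zero => exact Nat.le_zero.mp hkm ▸ hk
    | succ m ih =>
      rcases Nat.lt_or_ge k (m + 1) with h | h
      · have hm := ih (Nat.lt_succ_iff.mp h)
        rw [hO m]
        exact Or.inl (Set.mem_biUnion hm (hstep m))
      · have : k = m + 1 := le_antisymm hkm h
        exact this ▸ hk
  -- get a γ-transition at some i, then O never empties after i+1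
  obtain ⟨i, _, hi⟩ := hinf 0
  have hOin : ρ (i + 1) ∈ O (i + 1) := by
    rw [hO i]
    exact Or.inr (Set.mem_biUnion (hρS i) hi)
  obtain ⟨n, hn, hempty⟩ := hbp (i + 1)
  have := hO_stay (i + 1) n hn hOin
  rw [hempty] at this
  exact this
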